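/- Let $n \ge 3$, $1 \le k < n-2$. Then there exists a constant $C > 0$ such that for all $z \in \mathbb{R}^{n-k}$, $$\int_{\{\tilde{y} \in \mathbb{R}^k, |\tilde{z}| \le 1\}} \frac{d\tilde{y}\, d\tilde{z}}{\left(|y-\tilde{y}|^2 + |z - \tilde{z}|^2\right)^{(n-2)/2}} \ge \frac{C}{(1+|z|)^{n-2-k}}$$ for every $y \in \mathbb{R}^k$. -/

import Mathlib

open Real MeasureTheory Metric Set

lemma aux_ball_int {d : ℕ} (hd : 0 < d) {m : ℝ} (hm0 : 0 ≤ m) (hmd : m < d) :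
    IntegrableOn (fun w : EuclideanSpace ℝ (Fin d) => ‖w‖ ^ (-m))
      (Metric.ball 0 1) := by
  classical
  set V := EuclideanSpace ℝ (Fin d)
  set μ : Measure V := volume with hμ
  have hfinrank : Module.finrank ℝ V = d := finrank_euclideanSpace_fin
  have hmeas : Measurable (fun w : V => ‖w‖ ^ (-m)) := by fun_prop
  have hb : (0:ℝ) < 2⁻¹ := by norm_num
  haveI : Nonempty (Fin d) := ⟨⟨0, hd⟩⟩
  haveI : Nontrivial V := inferInstance
  set A : ℕ → Set V := fun j => ball 0 ((2:ℝ)⁻¹^j) \ ball 0 ((2:ℝ)⁻¹^(j+1)) with hA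
  set r0 : ℝ := (2:ℝ)⁻¹ ^ ((d:ℝ) - m) with hr0
  have hr0pos : 0 < r0 := Real.rpow_pos_of_pos hb _
  have hr0lt : r0 < 1 := Real.rpow_lt_one hb.le (by norm_num) (by
    have : (m:ℝ) < d := hmd
    linarith)
  set B₀ := μ (ball (0:V) 1) with hB₀
  have hB₀top : B₀ < ⊤ := measure_ball_lt_top
  have hreal : ∀ j : ℕ, ((2:ℝ)⁻¹^(j+1)) ^ (-m) * ((2:ℝ)⁻¹^j) ^ (d:ℕ) = 2^m * r0 ^ j := by
    intro j
    have e1 : ((2:ℝ)⁻¹^(j+1)) ^ (-m) = (2:ℝ)⁻¹ ^ (((j:ℝ)+1) * (-m)) := by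
      rw [← Real.rpow_natCast ((2:ℝ)⁻¹) (j+1), ← Real.rpow_mul hb.le]
      push_cast
      ring_nf
    have e2 : ((2:ℝ)⁻¹^j : ℝ) ^ (d:ℕ) = (2:ℝ)⁻¹ ^ ((j:ℝ) * d) := by
      rw [← Real.rpow_natCast ((2:ℝ)⁻¹ ^ j) d, ← Real.rpow_natCast ((2:ℝ)⁻¹) j,
        ← Real.rpow_mul hb.le]
    have e3 : r0 ^ j = (2:ℝ)⁻¹ ^ (((d:ℝ) - m) * j) := by
      rw [hr0, ← Real.rpow_natCast ((2:ℝ)⁻¹ ^ ((d:ℝ)-m)) j, ← Real.rpow_mul hb.le]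
    have e4 : (2:ℝ)^m = (2:ℝ)⁻¹ ^ (-m) := by
      rw [Real.inv_rpow (by norm_num), Real.rpow_neg (by norm_num), inv_inv]
    rw [e1, e2, e3, e4, ← Real.rpow_add hb, ← Real.rpow_add hb]
    congr 1
    ring
  have hcover : ball (0:V) 1 ⊆ {0} ∪ ⋃ j, A j := by
    intro w hw
    rcases eq_or_ne w 0 with h | h
    · exact Or.inl h
    have hw1 : ‖w‖ < 1 := by simpa using hw
    have hwpos : 0 < ‖w‖ := norm_pos_iff.2 h
    have hex : ∃ jj : ℕ, (2:ℝ)⁻¹ ^ (jj+1) ≤ ‖w‖ := by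
      obtain ⟨jj, hjj⟩ := exists_pow_lt_of_lt_one hwpos (by norm_num : (2:ℝ)⁻¹ < 1)
      exact ⟨jj, (pow_le_pow_of_le_one hb.le (by norm_num) (Nat.le_succ _)).trans hjj.le⟩
    refine Or.inr (mem_iUnion.2 ⟨Nat.find hex, ?_, ?_⟩)
    · rw [mem_ball, dist_zero_right]
      rcases Nat.eq_zero_or_pos (Nat.find hex) with h0 | hpos
      · rw [h0]; simpa using hw1
      · obtain ⟨j', hj'⟩ : ∃ j', Nat.find hex = j'+1 :=
          ⟨Nat.find hex - 1, (Nat.succ_pred_eq_of_pos hpos).symm⟩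
        rw [hj']
        have := Nat.find_min hex (by omega : j' < Nat.find hex)
        exact lt_of_not_ge this
    · rw [mem_ball, dist_zero_right]
      exact not_lt.2 (Nat.find_spec hex)
  have hAj : ∀ j : ℕ, ∫⁻ w in A j, ENNReal.ofReal (‖w‖ ^ (-m)) ∂μ ≤
      ENNReal.ofReal (2^m) * ENNReal.ofReal r0 ^ j * B₀ := by
    intro j
    have hAmeas : MeasurableSet (A j) := measurableSet_ball.diff measurableSet_ball
    have h1 : ∀ w ∈ A j, ENNReal.ofReal (‖w‖ ^ (-m)) ≤
        ENNReal.ofReal (((2:ℝ)⁻¹^(j+1)) ^ (-m)) := by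
      intro w hw
      apply ENNReal.ofReal_le_ofReal
      have hwge : (2:ℝ)⁻¹^(j+1) ≤ ‖w‖ := by
        have := hw.2
        rw [mem_ball, dist_zero_right, not_lt] at this
        exact this
      exact Real.rpow_le_rpow_of_nonpos (pow_pos hb _) hwge (neg_nonpos.2 hm0)
    calc ∫⁻ w in A j, ENNReal.ofReal (‖w‖ ^ (-m)) ∂μ
        ≤ ∫⁻ _ in A j, ENNReal.ofReal (((2:ℝ)⁻¹^(j+1)) ^ (-m)) ∂μ :=
          setLIntegral_mono measurable_const h1
      _ = ENNReal.ofReal (((2:ℝ)⁻¹^(j+1)) ^ (-m)) * μ (A j) := by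
          rw [setLIntegral_const]
      _ ≤ ENNReal.ofReal (((2:ℝ)⁻¹^(j+1)) ^ (-m)) * μ (ball 0 ((2:ℝ)⁻¹^j)) :=
          mul_le_mul_right (measure_mono diff_subset) _
      _ = ENNReal.ofReal (((2:ℝ)⁻¹^(j+1)) ^ (-m)) *
            (ENNReal.ofReal (((2:ℝ)⁻¹^j) ^ (d:ℕ)) * B₀) := by
          rw [Measure.addHaar_ball μ 0 (pow_pos hb j).le, hfinrank]
      _ = ENNReal.ofReal (2^m) * ENNReal.ofReal r0 ^ j * B₀ := by
          rw [← mul_assoc, ← ENNReal.ofReal_mul (Real.rpow_nonneg (pow_pos hb _).le _),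
            hreal j, ENNReal.ofReal_mul (by positivity), ENNReal.ofReal_pow hr0pos.le]
  constructor
  · exact hmeas.aestronglyMeasurable.restrict
  · rw [HasFiniteIntegral, lintegral_enorm_of_nonneg
      (fun w => Real.rpow_nonneg (norm_nonneg w) _)]
    calc ∫⁻ w in ball (0:V) 1, ENNReal.ofReal (‖w‖ ^ (-m)) ∂μ
        ≤ ∫⁻ w in ({0} ∪ ⋃ j, A j), ENNReal.ofReal (‖w‖ ^ (-m)) ∂μ :=
          lintegral_mono_set hcover
      _ ≤ (∫⁻ w in ({0} : Set V), ENNReal.ofReal (‖w‖ ^ (-m)) ∂μ) +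
          ∫⁻ w in (⋃ j, A j), ENNReal.ofReal (‖w‖ ^ (-m)) ∂μ := lintegral_union_le _ _ _
      _ ≤ 0 + ∑' j, ∫⁻ w in A j, ENNReal.ofReal (‖w‖ ^ (-m)) ∂μ := by
          gcongr
          · have h0 : μ ({0} : Set V) = 0 := by
              have : ({0} : Set V) = closedBall 0 0 := by rw [closedBall_zero]
              rw [this, Measure.addHaar_closedBall μ 0 le_rfl, hfinrank]
              simp [zero_pow hd.ne']
            rw [setLIntegral_measure_zero _ _ h0]
          · exact lintegral_iUnion_le _ _
      _ ≤ 0 + ∑' j, ENNReal.ofReal (2^m) * ENNReal.ofReal r0 ^ j * B₀ := by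
          gcongr
          exact hAj _
      _ = ENNReal.ofReal (2^m) * B₀ * (1 - ENNReal.ofReal r0)⁻¹ := by
          rw [zero_add]
          simp_rw [mul_comm _ B₀, ← mul_assoc, mul_comm B₀ _, mul_assoc]
          rw [ENNReal.tsum_mul_left, ENNReal.tsum_mul_left, ENNReal.tsum_geometric]
      _ < ⊤ := by
          apply ENNReal.mul_lt_top
          · exact ENNReal.mul_lt_top ENNReal.ofReal_lt_top hB₀top
          · rw [ENNReal.inv_lt_top]
            rw [tsub_pos_iff_lt]
            exact ENNReal.ofReal_lt_one.2 hr0lt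

lemma aux_ball_int2 {d : ℕ} (hd : 0 < d) {m : ℝ} (hm0 : 0 ≤ m) (hmd : m < d) (R : ℝ) :
    IntegrableOn (fun w : EuclideanSpace ℝ (Fin d) => ‖w‖ ^ (-m))
      (Metric.ball 0 R) := by
  have hmeas : Measurable (fun w : EuclideanSpace ℝ (Fin d) => ‖w‖ ^ (-m)) := by fun_prop
  have h2 : IntegrableOn (fun w : EuclideanSpace ℝ (Fin d) => ‖w‖ ^ (-m))
      (Metric.ball 0 R \ Metric.ball 0 1) := by
    refine Integrable.mono' (g := fun _ => (1:ℝ))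
      (integrableOn_const ?_) hmeas.aestronglyMeasurable.restrict ?_
    · exact ((measure_mono diff_subset).trans_lt measure_ball_lt_top).ne
    · filter_upwards [ae_restrict_mem (measurableSet_ball.diff measurableSet_ball)] with w hw
      have h1w : 1 ≤ ‖w‖ := by
        have := hw.2
        simpa using this
      rw [Real.norm_eq_abs, abs_of_nonneg (Real.rpow_nonneg (norm_nonneg _) _)]
      exact Real.rpow_le_one_of_one_le_of_nonpos h1w (neg_nonpos.2 hm0)
  refine ((aux_ball_int hd hm0 hmd).union h2).mono_set ?_
  intro w hw
  by_cases h : w ∈ Metric.ball (0 : EuclideanSpace ℝ (Fin d)) 1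
  · exact Or.inl h
  · exact Or.inr ⟨hw, h⟩

lemma aux_ball_trans {d : ℕ} (hd : 0 < d) {m : ℝ} (hm0 : 0 ≤ m) (hmd : m < d)
    (c : EuclideanSpace ℝ (Fin d)) (R : ℝ) :
    IntegrableOn (fun w : EuclideanSpace ℝ (Fin d) => ‖c - w‖ ^ (-m))
      (Metric.ball c R) := by
  have h := (integrable_indicator_iff
    (measurableSet_ball (x := (0 : EuclideanSpace ℝ (Fin d))) (ε := R))).2
    (aux_ball_int2 hd hm0 hmd R)
  have h' := h.comp_sub_right c
  refine (integrable_indicator_iff measurableSet_ball).1 ?_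
  have key : (Metric.ball c R).indicator
      (fun w : EuclideanSpace ℝ (Fin d) => ‖c - w‖ ^ (-m)) =
      fun x => (Metric.ball (0 : EuclideanSpace ℝ (Fin d)) R).indicator
        (fun w => ‖w‖ ^ (-m)) (x - c) := by
    funext x
    by_cases hx : x ∈ Metric.ball c R
    · rw [indicator_of_mem hx, indicator_of_mem (by simpa [mem_ball_iff_norm, dist_eq_norm] using hx),
        norm_sub_rev]
    · rw [indicator_of_notMem hx, indicator_of_notMem (by
        simpa [mem_ball_iff_norm, dist_eq_norm] using hx)]
  rw [key]
  exact h'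

lemma aux_sing {d : ℕ} (hd : 0 < d) (x : EuclideanSpace ℝ (Fin d)) :
    (volume : Measure (EuclideanSpace ℝ (Fin d))) {x} = 0 := by
  haveI : Nonempty (Fin d) := ⟨⟨0, hd⟩⟩
  haveI : Nontrivial (EuclideanSpace ℝ (Fin d)) := inferInstance
  have h : ({x} : Set (EuclideanSpace ℝ (Fin d))) = Metric.closedBall x 0 := by simp
  rw [h, Measure.addHaar_closedBall' volume x le_rfl, finrank_euclideanSpace_fin]
  simp [zero_pow hd.ne']

set_option maxHeartbeats 1000000 in
theorem stmt_6 {n k : ℕ} (hn : 3 ≤ n) (hk : 1 ≤ k) (hkn : k + 2 < n) :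
    ∃ C : ℝ, 0 < C ∧ ∀ z : EuclideanSpace ℝ (Fin (n - k)), ∀ y : EuclideanSpace ℝ (Fin k),
      C / (1 + ‖z‖) ^ ((n : ℝ) - 2 - k) ≤
        ∫ ty : EuclideanSpace ℝ (Fin k),
          ∫ tz in Metric.closedBall (0 : EuclideanSpace ℝ (Fin (n - k))) 1,
            1 / (‖y - ty‖ ^ 2 + ‖z - tz‖ ^ 2) ^ (((n : ℝ) - 2) / 2) := by
  classical
  set E := EuclideanSpace ℝ (Fin k)
  set V := EuclideanSpace ℝ (Fin (n - k))
  have hk0 : 0 < k := hk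
  have hnk0 : 0 < n - k := by omega
  haveI : Nonempty (Fin k) := ⟨⟨0, hk0⟩⟩
  haveI : Nonempty (Fin (n - k)) := ⟨⟨0, hnk0⟩⟩
  haveI : Nontrivial E := inferInstance
  haveI : Nontrivial V := inferInstance
  have hfinE : Module.finrank ℝ E = k := finrank_euclideanSpace_fin
  have hfinV : Module.finrank ℝ V = n - k := finrank_euclideanSpace_fin
  have h1k : (1:ℝ) ≤ (k:ℝ) := by exact_mod_cast hk
  have hkr : (k : ℝ) < (n : ℝ) - 2 := by
    have : (k : ℝ) + 2 < (n : ℝ) := by exact_mod_cast hkn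
    linarith
  have hnkcast : ((n - k : ℕ) : ℝ) = (n : ℝ) - (k : ℝ) := by
    push_cast [Nat.cast_sub (by omega : k ≤ n)]
    ring
  set s : ℝ := ((n : ℝ) - 2) / 2 with hs
  have hs0 : 0 ≤ s := by rw [hs]; linarith
  have h2s : 2 * s = (n : ℝ) - 2 := by rw [hs]; ring
  set α : ℝ := (k : ℝ) - 1/2 with hα
  set β : ℝ := (n : ℝ) - 2 - α with hβ
  have hα0 : 0 ≤ α := by rw [hα]; linarith
  have hαk : α < (k : ℝ) := by rw [hα]; linarith
  have hβ0 : 0 ≤ β := by rw [hβ, hα]; linarith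
  have hβd : β < ((n - k : ℕ) : ℝ) := by rw [hnkcast, hβ, hα]; linarith
  have hαβ : α + β = (n : ℝ) - 2 := by rw [hβ]; ring
  have hss : s = α/2 + β/2 := by rw [hs, hβ]; ring
  set ck : ℝ := (volume (Metric.closedBall (0 : E) 1)).toReal with hck
  set cV : ℝ := (volume (Metric.closedBall (0 : V) 1)).toReal with hcV
  have hckpos : 0 < ck := by
    rw [hck]
    refine ENNReal.toReal_pos ?_ measure_closedBall_lt_top.ne
    refine (measure_pos_of_superset ball_subset_closedBall ?_).ne'
    exact (measure_ball_pos volume 0 one_pos).ne'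
  have hcVpos : 0 < cV := by
    rw [hcV]
    refine ENNReal.toReal_pos ?_ measure_closedBall_lt_top.ne
    refine (measure_pos_of_superset ball_subset_closedBall ?_).ne'
    exact (measure_ball_pos volume 0 one_pos).ne'
  refine ⟨(2 : ℝ) ^ (-s) * ck * cV, by positivity, ?_⟩
  intro z y
  set B : Set V := Metric.closedBall 0 1 with hB
  set ν : Measure V := volume.restrict B with hν
  haveI : IsFiniteMeasure ν := ⟨by
    rw [hν, Measure.restrict_apply_univ, hB]; exact measure_closedBall_lt_top⟩
  set M : Measure (E × V) := (volume : Measure E).prod ν with hM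
  set F : E → V → ℝ := fun ty tz => 1 / (‖y - ty‖ ^ 2 + ‖z - tz‖ ^ 2) ^ s with hF
  have hFmeas : Measurable (Function.uncurry F) := by
    rw [hF]; unfold Function.uncurry; fun_prop
  have hFnonneg : ∀ p : E × V, 0 ≤ Function.uncurry F p := by
    intro p
    show 0 ≤ 1 / (‖y - p.1‖ ^ 2 + ‖z - p.2‖ ^ 2) ^ s
    positivity
  -- integrability of F on the strip
  have hfInt : Integrable (Function.uncurry F) M := by
    have hint1 : IntegrableOn (fun ty : E => ‖y - ty‖ ^ (-α)) (Metric.closedBall y 1) :=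
      (aux_ball_trans hk0 hα0 hαk y 2).mono_set (closedBall_subset_ball one_lt_two)
    have hg1 : Integrable
        ((Metric.closedBall y 1).indicator (fun ty : E => ‖y - ty‖ ^ (-α))) volume :=
      (integrable_indicator_iff measurableSet_closedBall).2 hint1
    have hint2 : Integrable (fun tz : V => ‖z - tz‖ ^ (-β)) ν := by
      rw [hν]
      refine (aux_ball_trans hnk0 hβ0 hβd z (2 + ‖z‖)).mono_set ?_
      intro tz htz
      rw [mem_ball_iff_norm]
      have h1 : ‖tz‖ ≤ 1 := mem_closedBall_zero_iff.1 htz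
      calc ‖tz - z‖ ≤ ‖tz‖ + ‖z‖ := norm_sub_le _ _
        _ < 2 + ‖z‖ := by linarith
    have hD1 : Integrable (fun p : E × V =>
        ((Metric.closedBall y 1).indicator (fun ty : E => ‖y - ty‖ ^ (-α))) p.1 *
        ‖z - p.2‖ ^ (-β)) M := hg1.mul_prod hint2
    have hbound_int : Integrable
        (fun ty : E => (2:ℝ)^((n:ℝ)-2) * (1 + ‖ty - y‖) ^ (-((n:ℝ)-2))) volume := by
      have h0 : Integrable (fun ty : E => (1 + ‖ty‖) ^ (-((n:ℝ)-2))) volume :=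
        integrable_one_add_norm (by rw [hfinE]; exact hkr)
      exact (h0.comp_sub_right y).const_mul _
    have hg3meas : Measurable (((Metric.closedBall y 1)ᶜ).indicator
        (fun ty : E => ‖y - ty‖ ^ (-((n:ℝ)-2)))) :=
      Measurable.indicator (by fun_prop) measurableSet_closedBall.compl
    have hg3 : Integrable (((Metric.closedBall y 1)ᶜ).indicator
        (fun ty : E => ‖y - ty‖ ^ (-((n:ℝ)-2)))) volume := by
      refine hbound_int.mono' hg3meas.aestronglyMeasurable (Filter.Eventually.of_forall ?_)
      intro ty
      by_cases hmem : ty ∈ (Metric.closedBall y 1)ᶜ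
      · rw [indicator_of_mem hmem]
        have h1t : 1 < ‖ty - y‖ := by
          have := hmem
          rw [mem_compl_iff, mem_closedBall, not_le, dist_eq_norm] at this
          exact this
        have htpos : 0 < ‖ty - y‖ := lt_trans one_pos h1t
        rw [Real.norm_eq_abs, abs_of_nonneg (Real.rpow_nonneg (norm_nonneg _) _),
          norm_sub_rev]
        have e : (0:ℝ) ≤ (n:ℝ) - 2 := by linarith
        have h1 : ((1+‖ty - y‖)/2) ^ ((n:ℝ)-2) ≤ ‖ty - y‖ ^ ((n:ℝ)-2) :=
          Real.rpow_le_rpow (by positivity) (by linarith) e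
        have h2 : (2:ℝ)^((n:ℝ)-2) * ((1+‖ty - y‖)^((n:ℝ)-2))⁻¹ =
            (((1+‖ty - y‖)/2)^((n:ℝ)-2))⁻¹ := by
          rw [Real.div_rpow (by positivity) (by norm_num), inv_div, div_eq_mul_inv]
        rw [Real.rpow_neg htpos.le, Real.rpow_neg (by positivity : (0:ℝ) ≤ 1 + ‖ty - y‖), h2]
        exact inv_anti₀ (Real.rpow_pos_of_pos (by positivity) _) h1
      · rw [indicator_of_notMem hmem, norm_zero]
        positivity
    have hD2 : Integrable (fun p : E × V =>
        (((Metric.closedBall y 1)ᶜ).indicator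
          (fun ty : E => ‖y - ty‖ ^ (-((n:ℝ)-2)))) p.1 * (1:ℝ)) M :=
      hg3.mul_prod (integrable_const 1)
    refine (hD1.add hD2).mono' hFmeas.aestronglyMeasurable ?_
    have hz0 : ν {z} = 0 := by
      rw [hν, Measure.restrict_apply (measurableSet_singleton z)]
      exact measure_mono_null inter_subset_left (aux_sing hnk0 z)
    have hN : M (({y} : Set E) ×ˢ (univ : Set V) ∪ (univ : Set E) ×ˢ ({z} : Set V)) = 0 := by
      refine measure_union_null ?_ ?_
      · rw [hM, Measure.prod_prod, aux_sing hk0 y, zero_mul]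
      · rw [hM, Measure.prod_prod, hz0, mul_zero]
    filter_upwards [measure_eq_zero_iff_ae_notMem.mp hN] with p hp
    have hp1 : p.1 ≠ y := by
      intro h
      exact hp (Or.inl (Set.mem_prod.2 ⟨by simp [h], trivial⟩))
    have hp2 : p.2 ≠ z := by
      intro h
      exact hp (Or.inr (Set.mem_prod.2 ⟨trivial, by simp [h]⟩))
    have ha : 0 < ‖y - p.1‖ := norm_sub_pos_iff.2 (Ne.symm hp1)
    have hbp : 0 < ‖z - p.2‖ := norm_sub_pos_iff.2 (Ne.symm hp2)
    have hXpos : 0 < ‖y - p.1‖^2 + ‖z - p.2‖^2 :=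
      add_pos_of_pos_of_nonneg (pow_pos ha 2) (sq_nonneg _)
    rw [Real.norm_eq_abs, abs_of_nonneg (hFnonneg p), Pi.add_apply]
    by_cases hmem : p.1 ∈ Metric.closedBall y 1
    · have hD2z : (((Metric.closedBall y 1)ᶜ).indicator
          (fun ty : E => ‖y - ty‖ ^ (-((n:ℝ)-2)))) p.1 = 0 :=
        indicator_of_notMem (by simpa using hmem) _
      show 1 / (‖y - p.1‖ ^ 2 + ‖z - p.2‖ ^ 2) ^ s ≤ _
      rw [indicator_of_mem hmem, hD2z, zero_mul, add_zero]
      have e1 : (‖y - p.1‖^2 : ℝ) ^ (α/2) = ‖y - p.1‖ ^ α := by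
        rw [← Real.rpow_natCast ‖y - p.1‖ 2, ← Real.rpow_mul (norm_nonneg _)]
        congr 1
        push_cast
        ring
      have e2 : (‖z - p.2‖^2 : ℝ) ^ (β/2) = ‖z - p.2‖ ^ β := by
        rw [← Real.rpow_natCast ‖z - p.2‖ 2, ← Real.rpow_mul (norm_nonneg _)]
        congr 1
        push_cast
        ring
      have key : ‖y - p.1‖ ^ α * ‖z - p.2‖ ^ β ≤
          (‖y - p.1‖ ^ 2 + ‖z - p.2‖ ^ 2) ^ s := by
        calc ‖y - p.1‖ ^ α * ‖z - p.2‖ ^ β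
            = (‖y - p.1‖^2 : ℝ) ^ (α/2) * (‖z - p.2‖^2 : ℝ) ^ (β/2) := by rw [e1, e2]
          _ ≤ (‖y - p.1‖ ^ 2 + ‖z - p.2‖ ^ 2) ^ (α/2) *
              (‖y - p.1‖ ^ 2 + ‖z - p.2‖ ^ 2) ^ (β/2) := by
              apply mul_le_mul
              · exact Real.rpow_le_rpow (sq_nonneg _) (le_add_of_nonneg_right (sq_nonneg _))
                  (by linarith [hα0])
              · exact Real.rpow_le_rpow (sq_nonneg _) (le_add_of_nonneg_left (sq_nonneg _))
                  (by linarith [hβ0])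
              · exact Real.rpow_nonneg (sq_nonneg _) _
              · exact Real.rpow_nonneg hXpos.le _
          _ = (‖y - p.1‖ ^ 2 + ‖z - p.2‖ ^ 2) ^ s := by
              rw [← Real.rpow_add hXpos, ← hss]
      calc 1 / (‖y - p.1‖ ^ 2 + ‖z - p.2‖ ^ 2) ^ s
          ≤ 1 / (‖y - p.1‖ ^ α * ‖z - p.2‖ ^ β) := by
            apply one_div_le_one_div_of_le
            · positivity
            · exact key
        _ = ‖y - p.1‖ ^ (-α) * ‖z - p.2‖ ^ (-β) := by
            rw [Real.rpow_neg ha.le, Real.rpow_neg hbp.le, one_div, mul_inv]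
    · have h1t : 1 < ‖y - p.1‖ := by
        rw [mem_closedBall, not_le, dist_eq_norm] at hmem
        rw [norm_sub_rev]
        exact hmem
      show 1 / (‖y - p.1‖ ^ 2 + ‖z - p.2‖ ^ 2) ^ s ≤ _
      rw [indicator_of_notMem hmem, zero_mul, zero_add,
        indicator_of_mem (by simpa using hmem), mul_one]
      have e3 : (‖y - p.1‖^2 : ℝ) ^ s = ‖y - p.1‖ ^ ((n:ℝ)-2) := by
        rw [← Real.rpow_natCast ‖y - p.1‖ 2, ← Real.rpow_mul (norm_nonneg _)]
        rw [show ((2:ℕ):ℝ) * s = (n:ℝ) - 2 by push_cast; exact h2s]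
      rw [Real.rpow_neg (norm_nonneg _), ← one_div, ← e3]
      apply one_div_le_one_div_of_le
      · positivity
      · exact Real.rpow_le_rpow (sq_nonneg _) (le_add_of_nonneg_right (sq_nonneg _)) hs0
  -- lower bound
  set R : ℝ := 1 + ‖z‖ with hR
  have hRpos : (0:ℝ) < R := by rw [hR]; positivity
  have hR1 : (1:ℝ) ≤ R := by rw [hR]; simp [norm_nonneg]
  set T : Set (E × V) := (Metric.closedBall y R ×ˢ B) \ {(y, z)} with hT
  have hTmeas : MeasurableSet T :=
    (measurableSet_closedBall.prod measurableSet_closedBall).diff (measurableSet_singleton _)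
  have hMsing : M {((y, z) : E × V)} = 0 := by
    rw [← Set.singleton_prod_singleton, hM, Measure.prod_prod, aux_sing hk0 y, zero_mul]
  have hMT : M T = volume (Metric.closedBall y R) * volume B := by
    rw [hT, measure_diff_null hMsing, hM, Measure.prod_prod, hν, Measure.restrict_apply_self]
  have hMTtop : M T ≠ ⊤ := by
    rw [hMT, hB]
    exact (ENNReal.mul_lt_top measure_closedBall_lt_top measure_closedBall_lt_top).ne
  have hvolP : (volume (Metric.closedBall y R)).toReal = R ^ ((k:ℝ)) * ck := by
    rw [Measure.addHaar_closedBall' volume y hRpos.le, hfinE, ENNReal.toReal_mul,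
      ENNReal.toReal_ofReal (by positivity), ← hck, Real.rpow_natCast]
  have hMTtoReal : (M T).toReal = R ^ ((k:ℝ)) * ck * cV := by
    rw [hMT, ENNReal.toReal_mul, hvolP, hB, ← hcV]
  set ε : ℝ := 1 / (2 * R^2) ^ s with hε
  have hεconst : ∀ p ∈ T, ε ≤ Function.uncurry F p := by
    intro p hp
    obtain ⟨⟨hp1, hp2⟩, hp3⟩ := hp
    have ha : ‖y - p.1‖ ≤ R := by
      rw [← dist_eq_norm, dist_comm]
      exact mem_closedBall.1 hp1
    have hbR : ‖z - p.2‖ ≤ R := by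
      have h1 : ‖p.2‖ ≤ 1 := mem_closedBall_zero_iff.1 hp2
      calc ‖z - p.2‖ ≤ ‖z‖ + ‖p.2‖ := norm_sub_le _ _
        _ ≤ ‖z‖ + 1 := by linarith
        _ = R := by rw [hR]; ring
    have hXpos : 0 < ‖y - p.1‖^2 + ‖z - p.2‖^2 := by
      have hne : p.1 ≠ y ∨ p.2 ≠ z := by
        by_contra hcon
        push_neg at hcon
        exact hp3 (by simp [Prod.ext_iff, hcon.1, hcon.2])
      rcases hne with h | h
      · exact add_pos_of_pos_of_nonneg (pow_pos (norm_sub_pos_iff.2 (Ne.symm h)) 2)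
          (sq_nonneg _)
      · exact add_pos_of_nonneg_of_pos (sq_nonneg _)
          (pow_pos (norm_sub_pos_iff.2 (Ne.symm h)) 2)
    have hXle : ‖y - p.1‖^2 + ‖z - p.2‖^2 ≤ 2 * R^2 := by
      nlinarith [norm_nonneg (y - p.1), norm_nonneg (z - p.2)]
    show ε ≤ 1 / (‖y - p.1‖ ^ 2 + ‖z - p.2‖ ^ 2) ^ s
    rw [hε]
    apply one_div_le_one_div_of_le
    · exact Real.rpow_pos_of_pos hXpos _
    · exact Real.rpow_le_rpow hXpos.le hXle hs0
  have harith : (2 : ℝ) ^ (-s) * ck * cV / R ^ ((n:ℝ) - 2 - (k:ℝ)) = ε * (M T).toReal := by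
    have hsplit : R ^ ((n:ℝ) - 2 - (k:ℝ)) = R ^ ((n:ℝ)-2) / R ^ ((k:ℝ)) :=
      Real.rpow_sub hRpos _ _
    have hε' : ε = ((2:ℝ)^s * R^((n:ℝ)-2))⁻¹ := by
      rw [hε, one_div]
      congr 1
      rw [Real.mul_rpow (by norm_num) (by positivity), ← Real.rpow_natCast R 2,
        ← Real.rpow_mul hRpos.le]
      rw [show ((2:ℕ):ℝ) * s = (n:ℝ) - 2 by push_cast; exact h2s]
    have h2pos : (0:ℝ) < (2:ℝ)^s := Real.rpow_pos_of_pos (by norm_num) _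
    have hRn : (0:ℝ) < R ^ ((n:ℝ)-2) := Real.rpow_pos_of_pos hRpos _
    have hRk : (0:ℝ) < R ^ ((k:ℝ)) := Real.rpow_pos_of_pos hRpos _
    rw [hMTtoReal, hε', hsplit, Real.rpow_neg (by norm_num : (0:ℝ) ≤ 2)]
    field_simp
  calc (2 : ℝ) ^ (-s) * ck * cV / R ^ ((n:ℝ) - 2 - (k:ℝ))
      = ε * (M T).toReal := harith
    _ ≤ ∫ p in T, Function.uncurry F p ∂M :=
        setIntegral_ge_of_const_le_real hTmeas hMTtop hεconst hfInt.integrableOn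
    _ ≤ ∫ p, Function.uncurry F p ∂M :=
        setIntegral_le_integral hfInt (Filter.Eventually.of_forall hFnonneg)
    _ = ∫ ty, ∫ tz, F ty tz ∂ν := (integral_integral hfInt).symm
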